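/- For any tree T, the nullity of T (multiplicity of eigenvalue 0 of its adjacency matrix) equals n - 2ν(T), where n is the number of vertices and ν(T) the matching number. -/
import Mathlib

open SimpleGraph Finset Module

set_option linter.unusedSectionVars false
set_option maxHeartbeats 1600000

def IsMatchingF {V : Type*} (G : SimpleGraph V) (M : Finset (Sym2 V)) : Prop :=
  (∀ e ∈ M, e ∈ G.edgeSet) ∧
  ∀ e ∈ M, ∀ f ∈ M, e ≠ f → ∀ v : V, ¬(v ∈ e ∧ v ∈ f)

noncomputable def matchNum {V : Type*} (G : SimpleGraph V) : ℕ :=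
  sSup {k | ∃ M : Finset (Sym2 V), IsMatchingF G M ∧ M.card = k}

universe u

section Aux
variable {V : Type*} [Fintype V] [DecidableEq V]

lemma sum_split {u v : V} (huv : u ≠ v) (S : Set V) [Fintype S]
    (hS : ∀ x, x ∈ S ↔ (x ≠ u ∧ x ≠ v)) (f : V → ℚ) :
    ∑ j, f j = f u + f v + ∑ j : S, f j.val := by
  classical
  have h1 : ∑ j ∈ Finset.univ \ {u, v}, f j = ∑ j : S, f j.val := by
    refine Finset.sum_subtype _ (fun x => ?_) f
    simp [hS x]
  have h2 := Finset.sum_sdiff (s₁ := ({u, v} : Finset V)) (s₂ := Finset.univ)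
    (Finset.subset_univ _) (f := f)
  rw [Finset.sum_pair huv, h1] at h2
  linarith

lemma ker_dim_eq (G : SimpleGraph V) [DecidableRel G.Adj] {u v : V}
    (huv : G.Adj u v) (hleaf : ∀ w, G.Adj u w → w = v)
    (S : Set V) [Fintype S] [DecidableRel (G.induce S).Adj]
    (hS : ∀ x, x ∈ S ↔ (x ≠ u ∧ x ≠ v)) :
    Module.finrank ℚ (LinearMap.ker (G.adjMatrix ℚ).mulVecLin)
      = Module.finrank ℚ (LinearMap.ker ((G.induce S).adjMatrix ℚ).mulVecLin) := by
  classical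
  set A := G.adjMatrix ℚ with hA
  set A' := (G.induce S).adjMatrix ℚ with hA'
  have hne : u ≠ v := huv.ne
  -- entry lemmas
  have hentry : ∀ i j : S, A' i j = A i.val j.val := by
    intro i j
    rw [hA', hA, SimpleGraph.adjMatrix_apply, SimpleGraph.adjMatrix_apply]
    exact if_congr (by simp) rfl rfl
  have hAuj : ∀ j, A u j = if j = v then 1 else 0 := by
    intro j
    rw [hA, SimpleGraph.adjMatrix_apply]
    refine if_congr ⟨fun h => hleaf j h, fun h => h ▸ huv⟩ rfl rfl
  have hAiu : ∀ i, i ≠ v → A i u = 0 := by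
    intro i hi
    rw [hA, SimpleGraph.adjMatrix_apply, if_neg]
    exact fun h => hi (hleaf i h.symm)
  have hAvu : A v u = 1 := by rw [hA, SimpleGraph.adjMatrix_apply, if_pos huv.symm]
  -- kernel membership as sums
  have hkerA : ∀ x : V → ℚ, x ∈ LinearMap.ker A.mulVecLin ↔ ∀ i, ∑ j, A i j * x j = 0 := by
    intro x
    rw [LinearMap.mem_ker]
    constructor
    · intro h i
      have := congrFun h i
      simpa [Matrix.mulVecLin_apply, Matrix.mulVec, dotProduct] using this
    · intro h
      funext i
      simpa [Matrix.mulVecLin_apply, Matrix.mulVec, dotProduct] using h i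
  have hkerA' : ∀ y : S → ℚ, y ∈ LinearMap.ker A'.mulVecLin ↔
      ∀ i : S, ∑ j : S, A i.val j.val * y j = 0 := by
    intro y
    rw [LinearMap.mem_ker]
    constructor
    · intro h i
      have := congrFun h i
      simp only [Matrix.mulVecLin_apply, Matrix.mulVec, dotProduct, Pi.zero_apply] at this
      simpa [hentry] using this
    · intro h
      funext i
      simp only [Matrix.mulVecLin_apply, Matrix.mulVec, dotProduct, Pi.zero_apply]
      simpa [hentry] using h i
  -- facts about kernel elements
  have hxv : ∀ x : V → ℚ, (∀ i, ∑ j, A i j * x j = 0) → x v = 0 := by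
    intro x hx
    have := hx u
    simp only [hAuj, ite_mul, one_mul, zero_mul] at this
    rwa [Finset.sum_ite_eq' Finset.univ v x, if_pos (Finset.mem_univ v)] at this
  have hxu : ∀ x : V → ℚ, (∀ i, ∑ j, A i j * x j = 0) →
      x u + ∑ j : S, A v j.val * x j.val = 0 := by
    intro x hx
    have h0 := hx v
    rw [sum_split hne S hS (fun j => A v j * x j)] at h0
    have hvv : A v v = 0 := by rw [hA]; simp
    rw [hAvu, hvv, one_mul, zero_mul, add_zero] at h0
    linarith
  -- the extension map
  set ext : (S → ℚ) → (V → ℚ) := fun y j =>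
    if hj : j ∈ S then y ⟨j, hj⟩
    else if j = v then 0 else -∑ j' : S, A v j'.val * y j' with hext
  have hext_mem : ∀ y j (hj : j ∈ S), ext y j = y ⟨j, hj⟩ := by
    intro y j hj; simp [hext, hj]
  have hext_u : ∀ y, ext y u = -∑ j' : S, A v j'.val * y j' := by
    intro y
    have : ¬ u ∈ S := fun h => ((hS u).mp h).1 rfl
    simp [hext, this, hne]
  have hext_v : ∀ y, ext y v = 0 := by
    intro y
    have : ¬ v ∈ S := fun h => ((hS v).mp h).2 rfl
    simp [hext, this]
  -- forward membership
  have hfwd : ∀ x : V → ℚ, (∀ i, ∑ j, A i j * x j = 0) →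
      ∀ i : S, ∑ j : S, A i.val j.val * x j.val = 0 := by
    intro x hx i
    have h0 := hx i.val
    rw [sum_split hne S hS (fun j => A i.val j * x j)] at h0
    rw [hAiu i.val ((hS i.val).mp i.2).2, hxv x hx, zero_mul, mul_zero, zero_add, zero_add] at h0
    exact h0
  -- backward membership
  have hbwd : ∀ y : S → ℚ, (∀ i : S, ∑ j : S, A i.val j.val * y j = 0) →
      ∀ i, ∑ j, A i j * ext y j = 0 := by
    intro y hy i
    rw [sum_split hne S hS (fun j => A i j * ext y j)]
    have hsS : ∀ i, ∑ j : S, A i j.val * ext y j.val = ∑ j : S, A i j.val * y j :=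
      fun i => Finset.sum_congr rfl (fun j _ => by rw [hext_mem y j.val j.2])
    by_cases hiu : i = u
    · subst hiu
      have h1 : A i i = 0 := by rw [hA]; simp
      rw [hsS, hext_v, h1, zero_mul, mul_zero, zero_add, zero_add]
      refine Finset.sum_eq_zero (fun j _ => ?_)
      rw [hAuj, if_neg ((hS j.val).mp j.2).2, zero_mul]
    by_cases hiv : i = v
    · subst hiv
      have h1 : A i i = 0 := by rw [hA]; simp
      rw [hsS, hext_v, hext_u, h1, hAvu, one_mul, zero_mul, add_zero]
      ring
    · have hiS : i ∈ S := (hS i).mpr ⟨hiu, hiv⟩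
      rw [hsS, hext_v, hAiu i hiv, zero_mul, mul_zero, zero_add, zero_add]
      exact hy ⟨i, hiS⟩
  -- the equivalence
  have e : LinearMap.ker A.mulVecLin ≃ₗ[ℚ] LinearMap.ker A'.mulVecLin :=
  { toFun := fun x => ⟨fun j => x.val j.val, (hkerA' _).mpr (hfwd x.val ((hkerA _).mp x.2))⟩
    map_add' := fun x y => rfl
    map_smul' := fun c x => rfl
    invFun := fun y => ⟨ext y.val, (hkerA _).mpr (hbwd y.val ((hkerA' _).mp y.2))⟩
    left_inv := fun x => by
      have hx := (hkerA _).mp x.2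
      apply Subtype.ext; funext j
      by_cases hj : j ∈ S
      · exact hext_mem _ j hj
      · have hj' : j = u ∨ j = v := by
          by_contra hcon
          push_neg at hcon
          exact hj ((hS j).mpr ⟨hcon.1, hcon.2⟩)
        rcases hj' with rfl | rfl
        · show ext _ j = x.val j
          rw [hext_u]
          have := hxu x.val hx
          have h2 : ∀ j' : S, A v j'.val * x.val j'.val
              = A v j'.val * (fun k : S => x.val k.val) j' := fun j' => rfl
          linarith [Finset.sum_congr rfl (fun j' (_ : j' ∈ Finset.univ) => h2 j')]
        · show ext _ j = x.val j
          rw [hext_v, hxv x.val hx]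
    right_inv := fun y => by
      apply Subtype.ext; funext j
      show ext y.val j.val = y.val j
      rw [hext_mem y.val j.val j.2] }
  exact LinearEquiv.finrank_eq e

lemma matchNum_bddAbove (G : SimpleGraph V) :
    BddAbove {k | ∃ M : Finset (Sym2 V), IsMatchingF G M ∧ M.card = k} :=
  ⟨Fintype.card (Sym2 V), fun _ ⟨M, _, hc⟩ => hc ▸ M.card_le_univ⟩

lemma exists_max_matching (G : SimpleGraph V) :
    ∃ M : Finset (Sym2 V), IsMatchingF G M ∧ M.card = matchNum G := by
  have := Nat.sSup_mem (s := {k | ∃ M : Finset (Sym2 V), IsMatchingF G M ∧ M.card = k})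
    ⟨0, ∅, ⟨fun e he => by simp at he, fun e he => by simp at he⟩, by simp⟩ (matchNum_bddAbove G)
  obtain ⟨M, hM, hc⟩ := this
  exact ⟨M, hM, hc⟩

lemma le_matchNum {G : SimpleGraph V} {M : Finset (Sym2 V)} (h : IsMatchingF G M) :
    M.card ≤ matchNum G :=
  le_csSup (matchNum_bddAbove G) ⟨M, h, rfl⟩

lemma matchNum_rec (G : SimpleGraph V) [DecidableRel G.Adj] {u v : V}
    (huv : G.Adj u v) (hleaf : ∀ w, G.Adj u w → w = v)
    (S : Set V) [Fintype S] (hS : ∀ x, x ∈ S ↔ (x ≠ u ∧ x ≠ v)) :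
    matchNum G = matchNum (G.induce S) + 1 := by
  classical
  have hne : u ≠ v := huv.ne
  apply le_antisymm
  · -- matchNum G ≤ matchNum (induce) + 1
    obtain ⟨M, hM, hc⟩ := exists_max_matching G
    set M₀ := M.filter (fun e => ¬ u ∈ e ∧ ¬ v ∈ e) with hM₀def
    -- the removed part has at most one edge
    have hout : (M.filter (fun e => u ∈ e ∨ v ∈ e)).card ≤ 1 := by
      rw [Finset.card_le_one]
      intro e he f hf
      simp only [Finset.mem_filter] at he hf
      have key : ∀ g ∈ M, (u ∈ g ∨ v ∈ g) → v ∈ g := by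
        intro g hg hg'
        rcases hg' with h | h
        · have hspec := Sym2.other_spec h
          have : g ∈ G.edgeSet := hM.1 g hg
          rw [← hspec] at this
          rw [SimpleGraph.mem_edgeSet] at this
          have := hleaf _ this
          rw [← hspec, this]
          exact Sym2.mem_mk_right u v
        · exact h
      by_contra hef
      exact hM.2 e he.1 f hf.1 hef v ⟨key e he.1 he.2, key f hf.1 hf.2⟩
    have hM₀eq : M₀ = M.filter (fun e => ¬ (u ∈ e ∨ v ∈ e)) := by
      rw [hM₀def]
      apply Finset.filter_congr
      intro e _
      simp [not_or]
    have hsplit : (M.filter (fun e => u ∈ e ∨ v ∈ e)).card + M₀.card = M.card := by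
      rw [hM₀eq]
      exact Finset.card_filter_add_card_filter_not (p := fun e => u ∈ e ∨ v ∈ e)
    -- map M₀ into the induced graph
    have hM₀S : ∀ e ∈ M₀, ∀ w, w ∈ e → w ∈ S := by
      intro e he w hw
      rw [hM₀def, Finset.mem_filter] at he
      refine (hS w).mpr ⟨?_, ?_⟩
      · rintro rfl; exact he.2.1 hw
      · rintro rfl; exact he.2.2 hw
    have hcard_le : matchNum (G.induce S) + 1 ≥ M₀.card + 1 := by
      by_cases hM₀ : M₀ = ∅
      · simp [hM₀]
      · obtain ⟨e₀, he₀⟩ := Finset.nonempty_iff_ne_empty.mpr hM₀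
        have hex : ∃ x, x ∈ e₀ := by
          induction e₀ using Sym2.ind with
          | _ a b => exact ⟨a, Sym2.mem_mk_left a b⟩
        obtain ⟨a₀, ha₀⟩ := hex
        have ha₀S : a₀ ∈ S := hM₀S e₀ he₀ a₀ ha₀
        set g : V → S := fun x => if hx : x ∈ S then ⟨x, hx⟩ else ⟨a₀, ha₀S⟩ with hg
        have hgval : ∀ x, x ∈ S → (g x).val = x := by
          intro x hx; simp [hg, hx]
        have hgid : ∀ e ∈ M₀, Sym2.map Subtype.val (Sym2.map g e) = e := by
          intro e he
          rw [Sym2.map_map]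
          have : Sym2.map (Subtype.val ∘ g) e = Sym2.map id e :=
            Sym2.map_congr (fun x hx => hgval x (hM₀S e he x hx))
          rw [this, Sym2.map_id, id_eq]
        have hmemval : ∀ e ∈ M₀, ∀ w : S, w ∈ Sym2.map g e → w.val ∈ e := by
          intro e he w hw
          rw [Sym2.mem_map] at hw
          obtain ⟨x, hx, hxw⟩ := hw
          have := hgval x (hM₀S e he x hx)
          rw [hxw] at this
          rw [this]
          exact hx
        set M' := M₀.image (Sym2.map g) with hM'
        have hM'match : IsMatchingF (G.induce S) M' := by
          constructor
          · intro e' he'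
            rw [hM', Finset.mem_image] at he'
            obtain ⟨e, he, rfl⟩ := he'
            have heS := hM₀S e he
            have heE : e ∈ G.edgeSet := hM.1 e (Finset.mem_filter.mp (hM₀def ▸ he)).1
            revert heE heS
            induction e using Sym2.ind with
            | _ a b =>
              intro heS heE
              rw [SimpleGraph.mem_edgeSet] at heE
              rw [Sym2.map_pair_eq, SimpleGraph.mem_edgeSet]
              have hga := hgval a (heS a (Sym2.mem_mk_left a b))
              have hgb := hgval b (heS b (Sym2.mem_mk_right a b))
              simp only [SimpleGraph.comap_adj, Function.Embedding.coe_subtype]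
              rwa [hga, hgb]
          · intro e' he' f' hf' hef w hw
            rw [hM', Finset.mem_image] at he' hf'
            obtain ⟨e, he, rfl⟩ := he'
            obtain ⟨f, hf, rfl⟩ := hf'
            have hef' : e ≠ f := fun h => hef (by rw [h])
            have h1 := hmemval e he w hw.1
            have h2 := hmemval f hf w hw.2
            exact hM.2 e (Finset.mem_filter.mp (hM₀def ▸ he)).1
              f (Finset.mem_filter.mp (hM₀def ▸ hf)).1 hef' w.val ⟨h1, h2⟩
        have hM'card : M'.card = M₀.card := by
          rw [hM']
          apply Finset.card_image_of_injOn
          intro e he f hf hef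
          have := hgid e he
          rw [hef, hgid f hf] at this
          exact this.symm
        have := le_matchNum hM'match
        omega
    omega
  · -- matchNum (induce) + 1 ≤ matchNum G
    obtain ⟨M', hM', hc'⟩ := exists_max_matching (G.induce S)
    set N := insert s(u, v) (M'.image (Sym2.map (Subtype.val : S → V))) with hN
    have hvalmem : ∀ e' : Sym2 S, ∀ w, w ∈ Sym2.map Subtype.val e' → w ∈ S := by
      intro e' w hw
      rw [Sym2.mem_map] at hw
      obtain ⟨x, _, hxw⟩ := hw
      exact hxw ▸ x.2
    have hNmatch : IsMatchingF G N := by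
      constructor
      · intro e he
        rw [hN, Finset.mem_insert] at he
        rcases he with rfl | he
        · exact huv
        · rw [Finset.mem_image] at he
          obtain ⟨e', he', rfl⟩ := he
          have heE : e' ∈ (G.induce S).edgeSet := hM'.1 e' he'
          revert heE
          induction e' using Sym2.ind with
          | _ a b =>
            intro heE
            rw [SimpleGraph.mem_edgeSet] at heE
            rw [Sym2.map_pair_eq, SimpleGraph.mem_edgeSet]
            simpa using heE
      · intro e he f hf hef w hw
        rw [hN, Finset.mem_insert] at he hf
        have huvS : ∀ w', w' ∈ s(u, v) → ¬ w' ∈ S := by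
          intro w' hw'
          rw [Sym2.mem_iff] at hw'
          rcases hw' with rfl | rfl
          · exact fun h => ((hS w').mp h).1 rfl
          · exact fun h => ((hS w').mp h).2 rfl
        rcases he with rfl | he <;> rcases hf with rfl | hf
        · exact hef rfl
        · rw [Finset.mem_image] at hf
          obtain ⟨f', _, rfl⟩ := hf
          exact huvS w hw.1 (hvalmem f' w hw.2)
        · rw [Finset.mem_image] at he
          obtain ⟨e', _, rfl⟩ := he
          exact huvS w hw.2 (hvalmem e' w hw.1)
        · rw [Finset.mem_image] at he hf
          obtain ⟨e', he', rfl⟩ := he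
          obtain ⟨f', hf', rfl⟩ := hf
          have hef' : e' ≠ f' := fun h => hef (by rw [h])
          obtain ⟨hw1, hw2⟩ := hw
          rw [Sym2.mem_map] at hw1 hw2
          obtain ⟨x, hx, hxw⟩ := hw1
          obtain ⟨y, hy, hyw⟩ := hw2
          have hxy : x = y := Subtype.ext (by rw [hxw, hyw])
          exact hM'.2 e' he' f' hf' hef' x ⟨hx, hxy ▸ hy⟩
    have hNcard : N.card = M'.card + 1 := by
      rw [hN]
      rw [Finset.card_insert_of_notMem]
      · congr 1
        exact Finset.card_image_of_injective _ (Sym2.map.injective Subtype.val_injective)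
      · intro hmem
        rw [Finset.mem_image] at hmem
        obtain ⟨e', _, heq⟩ := hmem
        have : u ∈ Sym2.map Subtype.val e' := heq ▸ Sym2.mem_mk_left u v
        have := hvalmem e' u this
        exact ((hS u).mp this).1 rfl
    have := le_matchNum hNmatch
    omega

lemma exists_leaf (G : SimpleGraph V) (hG : G.IsAcyclic) {a b : V} (hab : G.Adj a b) :
    ∃ u v, G.Adj u v ∧ ∀ w, G.Adj u w → w = v := by
  classical
  set Ls := {n | ∃ (x y : V) (p : G.Walk x y), p.IsPath ∧ p.length = n} with hLs
  have h1 : (1 : ℕ) ∈ Ls := ⟨a, b, (SimpleGraph.Path.singleton hab).1,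
    (SimpleGraph.Path.singleton hab).2, rfl⟩
  have hbdd : BddAbove Ls := ⟨Fintype.card V, fun n ⟨x, y, p, hp, hl⟩ => hl ▸ hp.length_lt.le⟩
  obtain ⟨x, y, p, hp, hl⟩ := Nat.sSup_mem ⟨1, h1⟩ hbdd
  have hpos : 0 < p.length := by
    have : 1 ≤ sSup Ls := le_csSup hbdd h1
    omega
  refine ⟨x, p.getVert 1, by simpa [p.getVert_zero] using p.adj_getVert_succ hpos, ?_⟩
  intro w hw
  by_cases hmem : w ∈ p.support
  · have hq1 : (p.takeUntil w hmem).IsPath := hp.takeUntil hmem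
    have := hG.path_unique ⟨p.takeUntil w hmem, hq1⟩ (SimpleGraph.Path.singleton hw)
    have heq : p.takeUntil w hmem = Walk.cons hw Walk.nil := congrArg Subtype.val this
    have hspec := p.take_spec hmem
    rw [heq] at hspec
    have : p.getVert 1 = w := by
      rw [← hspec]
      simp [Walk.getVert_zero]
    exact this.symm
  · exfalso
    have hpath : (Walk.cons hw.symm p).IsPath := hp.cons hmem
    have : p.length + 1 ∈ Ls := ⟨w, y, Walk.cons hw.symm p, hpath, rfl⟩
    have := le_csSup hbdd this
    omega

lemma no_edge_case (G : SimpleGraph V) [DecidableRel G.Adj] (h : ∀ a b, ¬ G.Adj a b) :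
    Module.finrank ℚ (LinearMap.ker (G.adjMatrix ℚ).mulVecLin) + 2 * matchNum G
      = Fintype.card V := by
  have hA : G.adjMatrix ℚ = 0 := by
    ext i j
    simp [SimpleGraph.adjMatrix_apply, h i j]
  have h1 : LinearMap.ker (G.adjMatrix ℚ).mulVecLin = ⊤ := by
    rw [hA, Matrix.mulVecLin_zero, LinearMap.ker_zero]
  have h2 : matchNum G = 0 := by
    obtain ⟨M, hM, hc⟩ := exists_max_matching G
    rw [← hc, Finset.card_eq_zero]
    by_contra hMne
    obtain ⟨e, he⟩ := Finset.nonempty_iff_ne_empty.mpr hMne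
    have := hM.1 e he
    revert this
    induction e using Sym2.ind with
    | _ a b => exact fun hE => h a b hE
  rw [h1, h2, finrank_top, Module.finrank_fintype_fun_eq_card]
  ring

end Aux

lemma forest_key : ∀ (n : ℕ) (W : Type u) [Fintype W] [DecidableEq W]
    (G : SimpleGraph W) [DecidableRel G.Adj], Fintype.card W ≤ n → G.IsAcyclic →
    Module.finrank ℚ (LinearMap.ker (G.adjMatrix ℚ).mulVecLin) + 2 * matchNum G
      = Fintype.card W := by
  intro n
  induction n with
  | zero =>
    intro W _ _ G _ hcard _
    haveI : IsEmpty W := Fintype.card_eq_zero_iff.mp (by omega)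
    exact no_edge_case G (fun a => (IsEmpty.false a).elim)
  | succ n IH =>
    intro W _ _ G _ hcard hacyc
    by_cases hedge : ∃ a b, G.Adj a b
    · obtain ⟨a, b, hab⟩ := hedge
      obtain ⟨u, v, huv, hleaf⟩ := exists_leaf G hacyc hab
      set S : Set W := {x | x ≠ u ∧ x ≠ v} with hSdef
      haveI : Fintype S := Fintype.ofFinite _
      haveI hdec : DecidableRel (G.induce S).Adj :=
        fun i j => decidable_of_iff (G.Adj i.val j.val) (by simp)
      have hS : ∀ x, x ∈ S ↔ (x ≠ u ∧ x ≠ v) := fun x => Iff.rfl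
      have hacyc' : (G.induce S).IsAcyclic := by
        intro w c hc
        exact hacyc (c.map (SimpleGraph.Embedding.induce (G := G) S).toHom)
          (hc.map (SimpleGraph.Embedding.induce (G := G) S).injective)
      have hcardS : Fintype.card S + 2 = Fintype.card W := by
        have h := sum_split huv.ne S hS (fun _ => (1 : ℚ))
        simp only [Finset.sum_const, Finset.card_univ, nsmul_eq_mul, mul_one] at h
        have h2 : ((Fintype.card S + 2 : ℕ) : ℚ) = (Fintype.card W : ℚ) := by
          push_cast
          linarith
        exact_mod_cast h2
      have hIH := IH S (G.induce S) (by omega) hacyc'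
      rw [ker_dim_eq G huv hleaf S hS, matchNum_rec G huv hleaf S hS]
      omega
    · push_neg at hedge
      exact no_edge_case G hedge

theorem tree_nullity_eq {V : Type*} [Fintype V] [DecidableEq V]
    (G : SimpleGraph V) [DecidableRel G.Adj] (hT : G.IsTree) :
    Fintype.card V - (G.adjMatrix ℚ).rank = Fintype.card V - 2 * matchNum G := by
  have hkey := forest_key (Fintype.card V) V G le_rfl hT.IsAcyclic
  have hrn := LinearMap.finrank_range_add_finrank_ker (G.adjMatrix ℚ).mulVecLin
  rw [Module.finrank_fintype_fun_eq_card] at hrn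
  have hrank : (G.adjMatrix ℚ).rank
      = Module.finrank ℚ (LinearMap.range (G.adjMatrix ℚ).mulVecLin) := rfl
  omega
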